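/- If X, Y and Z are half-synchronized subshifts with X = Y × Z, then the Fischer graph of X equals the tensor product of the Fischer graphs of Y and Z: F_X = F_Y × F_Z. -/

import Mathlib

namespace Paper

variable {A B C : Type*}

def shiftMap (x : ℤ → A) : ℤ → A := fun i => x (i + 1)

def shiftInvMap (x : ℤ → A) : ℤ → A := fun i => x (i - 1)

/-- A subshift: nonempty, shift-invariant (both directions), and closed
(expressed combinatorially: any configuration all of whose central patterns
are approximated by members is a member). -/
def IsSubshift (X : Set (ℤ → A)) : Prop :=
  X.Nonempty ∧ (∀ x ∈ X, shiftMap x ∈ X) ∧ (∀ x ∈ X, shiftInvMap x ∈ X) ∧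
  ∀ x : ℤ → A, (∀ n : ℕ, ∃ y ∈ X, ∀ i : ℤ, |i| ≤ (n : ℤ) → y i = x i) → x ∈ X

/-- The word `x[i, i+k-1]`. -/
def cfgWord (x : ℤ → A) (i : ℤ) (k : ℕ) : List A :=
  List.ofFn (fun t : Fin k => x (i + ((t : ℕ) : ℤ)))

/-- The language of a set of configurations. -/
def lang (X : Set (ℤ → A)) : Set (List A) := {w | ∃ x ∈ X, ∃ i : ℤ, cfgWord x i w.length = w}

def TransitiveShift (X : Set (ℤ → A)) : Prop :=
  ∀ u ∈ lang X, ∀ v ∈ lang X, ∃ w : List A, u ++ w ++ v ∈ lang X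

/-- Left ray of a configuration: `leftRay x n = x (-1-n)`. -/
def leftRay (x : ℤ → A) : ℕ → A := fun n => x (-1 - (n : ℤ))

def rightRay (x : ℤ → A) : ℕ → A := fun n => x (n : ℤ)

def LeftRays (X : Set (ℤ → A)) : Set (ℕ → A) := leftRay '' X

def RightRays (X : Set (ℤ → A)) : Set (ℕ → A) := rightRay '' X

/-- Glue a left ray and a right ray into a configuration. -/
def glue (l r : ℕ → A) : ℤ → A := fun i => if 0 ≤ i then r i.toNat else l (-1 - i).toNat

/-- Follower set of a left-infinite sequence. -/
def foll (X : Set (ℤ → A)) (l : ℕ → A) : Set (ℕ → A) := {r | glue l r ∈ X}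

def wordThen (w : List A) (r : ℕ → A) : ℕ → A :=
  fun n => if h : n < w.length then w.get ⟨n, h⟩ else r (n - w.length)

/-- Follower set of a word. -/
def follW (X : Set (ℤ → A)) (w : List A) : Set (ℕ → A) := {r | wordThen w r ∈ RightRays X}

def occursInLeft (l : ℕ → A) (w : List A) : Prop :=
  ∃ j : ℕ, ∀ k : Fin w.length, l (j + (w.length - 1 - (k : ℕ))) = w.get k

/-- The language of a left-infinite sequence. -/
def langL (l : ℕ → A) : Set (List A) := {w | occursInLeft l w}

/-- The left ray `l` ends with the word `w`. -/
def raySuffix (l : ℕ → A) (w : List A) : Prop :=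
  ∀ k : Fin w.length, l (w.length - 1 - (k : ℕ)) = w.get k

def HalfSyncWord (X : Set (ℤ → A)) (w : List A) : Prop :=
  w ∈ lang X ∧ ∃ l ∈ LeftRays X, raySuffix l w ∧ langL l = lang X ∧ foll X l = follW X w

def HalfSynchronized (X : Set (ℤ → A)) : Prop := TransitiveShift X ∧ ∃ w, HalfSyncWord X w

def SyncWord (X : Set (ℤ → A)) (w : List A) : Prop :=
  w ∈ lang X ∧ ∀ l ∈ LeftRays X, raySuffix l w → foll X l = follW X w

def Synchronized (X : Set (ℤ → A)) : Prop := TransitiveShift X ∧ ∃ w, SyncWord X w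

/-- Product of two subshifts, over the product alphabet. -/
def prodShift (Y : Set (ℤ → B)) (Z : Set (ℤ → C)) : Set (ℤ → B × C) :=
  {x | (fun i => (x i).1) ∈ Y ∧ (fun i => (x i).2) ∈ Z}

/-- Identification of a pair of sets of right rays with a set of right rays
over the product alphabet. -/
def prodRaySet (S : Set (ℕ → B)) (T : Set (ℕ → C)) : Set (ℕ → B × C) :=
  {r | (fun n => (r n).1) ∈ S ∧ (fun n => (r n).2) ∈ T}

/-- Extend a left ray by one more symbol on the right. -/
def extendRay (l : ℕ → A) (a : A) : ℕ → A := fun n => if n = 0 then a else l (n - 1)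

/-- Edge of the Krieger graph from `u` to `v` labeled `a`. -/
def KEdge (X : Set (ℤ → A)) (u : Set (ℕ → A)) (a : A) (v : Set (ℕ → A)) : Prop :=
  ∃ l ∈ LeftRays X, extendRay l a ∈ LeftRays X ∧ u = foll X l ∧ v = foll X (extendRay l a)

def KStep (X : Set (ℤ → A)) (u v : Set (ℕ → A)) : Prop := ∃ a, KEdge X u a v

/-- Existence of a finite path in the Krieger graph. -/
def KReach (X : Set (ℤ → A)) : Set (ℕ → A) → Set (ℕ → A) → Prop :=
  Relation.ReflTransGen (KStep X)

def KVertex (X : Set (ℤ → A)) (v : Set (ℕ → A)) : Prop := ∃ l ∈ LeftRays X, v = foll X l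

/-- A subshift is sofic iff it has finitely many follower sets. -/
def Sofic (X : Set (ℤ → A)) : Prop := {v : Set (ℕ → A) | KVertex X v}.Finite

/-- Vertex of the Fischer graph (w.r.t. half-synchronizing word `w`): a vertex of the
Krieger graph in the maximal strongly connected subgraph containing `foll w`. -/
def FVertex (X : Set (ℤ → A)) (w : List A) (v : Set (ℕ → A)) : Prop :=
  KVertex X v ∧ KReach X (follW X w) v ∧ KReach X v (follW X w)

/-- Directed (multi)graph with vertex type `V` and edge type `E`. -/
structure DiGraph (V : Type*) (E : Type*) where
  ini : E → V
  ter : E → V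

variable {V E V' E' : Type*}

/-- Bi-infinite path on a graph. -/
def BiPath (G : DiGraph V E) (x : ℤ → E) : Prop := ∀ i : ℤ, G.ter (x i) = G.ini (x (i + 1))

/-- `p` is a finite path of `m+1` edges. -/
def FinPath (G : DiGraph V E) (m : ℕ) (p : Fin (m + 1) → E) : Prop :=
  ∀ k : Fin m, G.ter (p k.castSucc) = G.ini (p k.succ)

/-- The subpath `x[i, i+n]` of a bi-infinite path is a shortest path between its endpoints. -/
def GeodesicSeg (G : DiGraph V E) (x : ℤ → E) (i : ℤ) (n : ℕ) : Prop :=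
  ∀ (m : ℕ) (p : Fin (m + 1) → E), FinPath G m p →
    G.ini (p 0) = G.ini (x i) → G.ter (p (Fin.last m)) = G.ter (x (i + (n : ℤ))) → n ≤ m

def EvGeodesic (G : DiGraph V E) (x : ℤ → E) : Prop :=
  ∃ i₀ : ℤ, ∀ i : ℤ, i₀ ≤ i → ∀ n : ℕ, GeodesicSeg G x i n

/-- Strictly proximal pair of bi-infinite paths. -/
def StrictProxPair (x y : ℤ → E) : Prop :=
  (∀ n : ℕ, ∃ i : ℕ, ∀ k : ℕ, k ≤ n → x ((i : ℤ) + (k : ℤ)) = y ((i : ℤ) + (k : ℤ))) ∧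
  ∀ N : ℕ, ∃ i : ℕ, N ≤ i ∧ x ((i : ℕ) : ℤ) ≠ y ((i : ℕ) : ℤ)

def HasEvGeoProxPair (G : DiGraph V E) : Prop :=
  ∃ x y : ℤ → E, BiPath G x ∧ BiPath G y ∧ EvGeodesic G x ∧ EvGeodesic G y ∧ StrictProxPair x y

/-- Edges of the Fischer graph: Krieger edges between Fischer vertices. -/
def FischerE (X : Set (ℤ → A)) (w : List A) : Type _ :=
  {t : Set (ℕ → A) × A × Set (ℕ → A) //
    FVertex X w t.1 ∧ FVertex X w t.2.2 ∧ KEdge X t.1 t.2.1 t.2.2}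

def FischerGraph (X : Set (ℤ → A)) (w : List A) : DiGraph (Set (ℕ → A)) (FischerE X w) :=
  ⟨fun e => e.1.1, fun e => e.1.2.2⟩

def SlidingBlockCode (X : Set (ℤ → A)) (F : (ℤ → A) → (ℤ → B)) : Prop :=
  ∃ (r : ℕ) (f : (Fin (2 * r + 1) → A) → B),
    ∀ x ∈ X, ∀ i : ℤ, F x i = f (fun k => x (i + ((k : ℕ) : ℤ) - (r : ℤ)))

def ShiftConjugate (X : Set (ℤ → A)) (Y : Set (ℤ → B)) : Prop :=
  ∃ F : (ℤ → A) → (ℤ → B), SlidingBlockCode X F ∧ Set.InjOn F X ∧ F '' X = Y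

def DirectPrime (X : Set (ℤ → A)) : Prop :=
  ∀ (B C : Type) (_ : Finite B) (_ : Finite C) (Y : Set (ℤ → B)) (Z : Set (ℤ → C)),
    IsSubshift Y → IsSubshift Z → ShiftConjugate X (prodShift Y Z) →
    (∃ y, Y = {y}) ∨ (∃ z, Z = {z})

/-! ### infrastructure -/

lemma wordThen_nil (r : ℕ → A) : wordThen ([] : List A) r = r := by
  funext n; simp [wordThen]

lemma wordThen_append (u v : List A) (r : ℕ → A) :
    wordThen (u ++ v) r = wordThen u (wordThen v r) := by
  funext n
  simp only [wordThen, List.length_append]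
  by_cases h1 : n < u.length
  · rw [dif_pos (by omega), dif_pos h1]
    simp [List.get_eq_getElem, List.getElem_append_left h1]
  · by_cases h2 : n < u.length + v.length
    · rw [dif_pos h2, dif_neg h1, dif_pos (by omega : n - u.length < v.length)]
      simp only [List.get_eq_getElem]
      rw [List.getElem_append_right (by omega)]
    · rw [dif_neg h2, dif_neg h1, dif_neg (by omega : ¬ n - u.length < v.length)]
      congr 1; omega

/-- Follower extension of a set of right rays by a word. -/
def fExt (S : Set (ℕ → A)) (u : List A) : Set (ℕ → A) := {r | wordThen u r ∈ S}

lemma fExt_nil (S : Set (ℕ → A)) : fExt S [] = S := by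
  ext r; simp [fExt, wordThen_nil]

lemma fExt_append (S : Set (ℕ → A)) (u v : List A) :
    fExt S (u ++ v) = fExt (fExt S u) v := by
  ext r; simp [fExt, wordThen_append]

lemma follW_eq_fExt (X : Set (ℤ → A)) (u : List A) : follW X u = fExt (RightRays X) u := rfl

lemma follW_append (X : Set (ℤ → A)) (u v : List A) :
    follW X (u ++ v) = fExt (follW X u) v := by
  rw [follW_eq_fExt, fExt_append, follW_eq_fExt]

/-! shifts -/

lemma shift_mem {X : Set (ℤ → A)} (hX : IsSubshift X) {x : ℤ → A} (hx : x ∈ X) (i : ℤ) :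
    (fun n => x (n + i)) ∈ X := by
  obtain ⟨-, hfwd, hbwd, -⟩ := hX
  have aux1 : ∀ k : ℕ, (fun n => x (n + (k : ℤ))) ∈ X := by
    intro k
    induction k with
    | zero => simpa using hx
    | succ k ih =>
        have := hfwd _ ih
        have heq : shiftMap (fun n => x (n + (k : ℤ))) = fun n => x (n + ((k+1 : ℕ) : ℤ)) := by
          funext n; simp only [shiftMap]; congr 1; push_cast; ring
        rwa [heq] at this
  have aux2 : ∀ k : ℕ, (fun n => x (n - (k : ℤ))) ∈ X := by
    intro k
    induction k with
    | zero => simpa using hx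
    | succ k ih =>
        have := hbwd _ ih
        have heq : shiftInvMap (fun n => x (n - (k : ℤ))) = fun n => x (n - ((k+1 : ℕ) : ℤ)) := by
          funext n; simp only [shiftInvMap]; congr 1; push_cast; ring
        rwa [heq] at this
  rcases le_or_gt 0 i with h | h
  · have : (fun n => x (n + i)) = fun n => x (n + (i.toNat : ℤ)) := by
      funext n; congr 1; omega
    rw [this]; exact aux1 _
  · have : (fun n => x (n + i)) = fun n => x (n - ((-i).toNat : ℤ)) := by
      funext n; congr 1; omega
    rw [this]; exact aux2 _

/-! glue -/

lemma glue_leftRay_rightRay (x : ℤ → A) : glue (leftRay x) (rightRay x) = x := by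
  funext i
  simp only [glue, leftRay, rightRay]
  by_cases h : 0 ≤ i
  · rw [if_pos h]; congr 1; omega
  · rw [if_neg h]; congr 1; omega

lemma leftRay_glue (l r : ℕ → A) : leftRay (glue l r) = l := by
  funext n
  simp only [glue, leftRay]
  rw [if_neg (by omega)]
  congr 1; omega

lemma mem_LeftRays_iff {X : Set (ℤ → A)} {l : ℕ → A} :
    l ∈ LeftRays X ↔ (foll X l).Nonempty := by
  constructor
  · rintro ⟨x, hx, rfl⟩
    exact ⟨rightRay x, by simp only [foll, Set.mem_setOf_eq, glue_leftRay_rightRay]; exact hx⟩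
  · rintro ⟨r, hr⟩
    exact ⟨glue l r, hr, leftRay_glue l r⟩

lemma rightRay_mem {X : Set (ℤ → A)} {x : ℤ → A} (hx : x ∈ X) : rightRay x ∈ RightRays X :=
  ⟨x, hx, rfl⟩

lemma glue_extend (l : ℕ → A) (a : A) (r : ℕ → A) :
    glue (extendRay l a) r = shiftMap (glue l (wordThen [a] r)) := by
  funext i
  simp only [glue, extendRay, shiftMap, wordThen]
  rcases lt_trichotomy i 0 with h | h | h
  · rw [if_neg (by omega)]
    by_cases h1 : i = -1
    · subst h1
      rw [if_pos (by norm_num), if_pos (by norm_num)]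
      simp
    · rw [if_neg (by omega 
        : ¬ 0 ≤ i + 1), if_neg (by omega : ¬ (-1 - i).toNat = 0)]
      congr 1; omega
  · subst h
    rw [if_pos le_rfl, if_pos (by norm_num)]
    rw [dif_neg (by simp only [List.length_singleton]; omega)]
    congr 1
  · rw [if_pos (by omega), if_pos (by omega)]
    rw [dif_neg (by simp only [List.length_singleton]; omega)]
    congr 1
    simp only [List.length_singleton]
    omega

lemma foll_extend {X : Set (ℤ → A)} (hX : IsSubshift X) (l : ℕ → A) (a : A) :
    foll X (extendRay l a) = fExt (foll X l) [a] := by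
  ext r
  simp only [foll, fExt, Set.mem_setOf_eq]
  rw [glue_extend]
  constructor
  · intro h
    have := hX.2.2.1 _ h
    have heq : shiftInvMap (shiftMap (glue l (wordThen [a] r))) = glue l (wordThen [a] r) := by
      funext i; simp only [shiftInvMap, shiftMap]; congr 1; ring
    rwa [heq] at this
  · intro h
    exact hX.2.1 _ h

/-- Append a word (in time order) at the (recent) end of a left ray. -/
def appendRay (l : ℕ → A) (u : List A) : ℕ → A := u.foldl extendRay l

lemma appendRay_nil (l : ℕ → A) : appendRay l [] = l := rfl

lemma appendRay_concat (l : ℕ → A) (u : List A) (a : A) :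
    appendRay l (u ++ [a]) = extendRay (appendRay l u) a := by
  simp [appendRay, List.foldl_append]

lemma foll_appendRay {X : Set (ℤ → A)} (hX : IsSubshift X) (l : ℕ → A) (u : List A) :
    foll X (appendRay l u) = fExt (foll X l) u := by
  induction u using List.reverseRecOn with
  | nil => rw [appendRay_nil, fExt_nil]
  | append_singleton u a ih =>
      rw [appendRay_concat, foll_extend hX, ih, ← fExt_append]

lemma fExt_nonempty_prefix {S : Set (ℕ → A)} {u v : List A}
    (h : (fExt S (u ++ v)).Nonempty) : (fExt S u).Nonempty := by
  obtain ⟨r, hr⟩ := h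
  rw [fExt_append] at hr
  exact ⟨wordThen v r, hr⟩

/-! paths -/

lemma kreach_word {X : Set (ℤ → A)} (hX : IsSubshift X) {l : ℕ → A} (hl : l ∈ LeftRays X)
    (u : List A) (hne : (fExt (foll X l) u).Nonempty) :
    KReach X (foll X l) (fExt (foll X l) u) := by
  induction u using List.reverseRecOn with
  | nil => rw [fExt_nil]; exact Relation.ReflTransGen.refl
  | append_singleton u a ih =>
      have hneu : (fExt (foll X l) u).Nonempty := fExt_nonempty_prefix hne
      have step : KStep X (fExt (foll X l) u) (fExt (foll X l) (u ++ [a])) := by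
        refine ⟨a, appendRay l u, ?_, ?_, ?_, ?_⟩
        · rw [mem_LeftRays_iff, foll_appendRay hX]; exact hneu
        · rw [mem_LeftRays_iff]
          have : foll X (extendRay (appendRay l u) a) = fExt (foll X l) (u ++ [a]) := by
            rw [foll_extend hX, foll_appendRay hX, ← fExt_append]
          rw [this]; exact hne
        · rw [foll_appendRay hX]
        · rw [foll_extend hX, foll_appendRay hX, ← fExt_append]
      exact Relation.ReflTransGen.tail (ih hneu) step

lemma word_of_kreach {X : Set (ℤ → A)} (hX : IsSubshift X) {s v : Set (ℕ → A)}
    (h : KReach X s v) : ∃ u : List A, v = fExt s u := by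
  induction h with
  | refl => exact ⟨[], (fExt_nil s).symm⟩
  | tail hreach hstep ih =>
      obtain ⟨u, rfl⟩ := ih
      obtain ⟨a, l, hl, hla, hul, hvl⟩ := hstep
      refine ⟨u ++ [a], ?_⟩
      rw [hvl, foll_extend hX, ← hul, ← fExt_append]


lemma wordThen_eval_lt {w : List A} {r : ℕ → A} {k : ℕ} (h : k < w.length) :
    wordThen w r k = w[k] := by
  simp only [wordThen, dif_pos h, List.get_eq_getElem]

lemma wordThen_eval_ge {w : List A} {r : ℕ → A} {k : ℕ} (h : w.length ≤ k) :
    wordThen w r k = r (k - w.length) := by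
  simp only [wordThen, dif_neg (by omega : ¬ k < w.length)]

/-! ### products -/

variable {Y : Set (ℤ → B)} {Z : Set (ℤ → C)}

lemma pair_mem_prodShift {y : ℤ → B} {z : ℤ → C} (hy : y ∈ Y) (hz : z ∈ Z) :
    (fun i => (y i, z i)) ∈ prodShift Y Z := ⟨hy, hz⟩

lemma prod_isSubshift (hY : IsSubshift Y) (hZ : IsSubshift Z) :
    IsSubshift (prodShift Y Z) := by
  obtain ⟨⟨y, hy⟩, hYf, hYb, hYc⟩ := hY
  obtain ⟨⟨z, hz⟩, hZf, hZb, hZc⟩ := hZ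
  refine ⟨⟨fun i => (y i, z i), hy, hz⟩, ?_, ?_, ?_⟩
  · rintro x ⟨h1, h2⟩; exact ⟨hYf _ h1, hZf _ h2⟩
  · rintro x ⟨h1, h2⟩; exact ⟨hYb _ h1, hZb _ h2⟩
  · intro x hx
    constructor
    · refine hYc _ fun n => ?_
      obtain ⟨x', hx', hagree⟩ := hx n
      exact ⟨fun i => (x' i).1, hx'.1, fun i hi => congrArg Prod.fst (hagree i hi)⟩
    · refine hZc _ fun n => ?_
      obtain ⟨x', hx', hagree⟩ := hx n
      exact ⟨fun i => (x' i).2, hx'.2, fun i hi => congrArg Prod.snd (hagree i hi)⟩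

lemma glue_fst (l r : ℕ → B × C) :
    (fun i => (glue l r i).1) = glue (fun n => (l n).1) (fun n => (r n).1) := by
  funext i; simp only [glue, apply_ite Prod.fst]

lemma glue_snd (l r : ℕ → B × C) :
    (fun i => (glue l r i).2) = glue (fun n => (l n).2) (fun n => (r n).2) := by
  funext i; simp only [glue, apply_ite Prod.snd]

lemma foll_prod (l : ℕ → B × C) :
    foll (prodShift Y Z) l
      = prodRaySet (foll Y (fun n => (l n).1)) (foll Z (fun n => (l n).2)) := by
  ext r
  show glue l r ∈ prodShift Y Z ↔ _
  constructor
  · rintro ⟨h1, h2⟩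
    constructor
    · show glue _ _ ∈ Y
      rwa [← glue_fst]
    · show glue _ _ ∈ Z
      rwa [← glue_snd]
  · rintro ⟨h1, h2⟩
    have h1' : glue (fun n => (l n).1) (fun n => (r n).1) ∈ Y := h1
    have h2' : glue (fun n => (l n).2) (fun n => (r n).2) ∈ Z := h2
    rw [← glue_fst] at h1'
    rw [← glue_snd] at h2'
    exact ⟨h1', h2'⟩

lemma RightRays_prod :
    RightRays (prodShift Y Z) = prodRaySet (RightRays Y) (RightRays Z) := by
  ext r
  constructor
  · rintro ⟨x, ⟨h1, h2⟩, rfl⟩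
    exact ⟨⟨fun i => (x i).1, h1, rfl⟩, ⟨fun i => (x i).2, h2, rfl⟩⟩
  · rintro ⟨⟨x₁, hx₁, h1⟩, ⟨x₂, hx₂, h2⟩⟩
    refine ⟨fun i => (x₁ i, x₂ i), ⟨hx₁, hx₂⟩, ?_⟩
    funext n
    have e1 : x₁ (n : ℤ) = (r n).1 := congrFun h1 n
    have e2 : x₂ (n : ℤ) = (r n).2 := congrFun h2 n
    show (x₁ (n:ℤ), x₂ (n:ℤ)) = r n
    rw [e1, e2]

lemma LeftRays_comp_fst {l : ℕ → B × C} (h : l ∈ LeftRays (prodShift Y Z)) :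
    (fun n => (l n).1) ∈ LeftRays Y := by
  obtain ⟨x, hx, rfl⟩ := h
  exact ⟨fun i => (x i).1, hx.1, rfl⟩

lemma LeftRays_comp_snd {l : ℕ → B × C} (h : l ∈ LeftRays (prodShift Y Z)) :
    (fun n => (l n).2) ∈ LeftRays Z := by
  obtain ⟨x, hx, rfl⟩ := h
  exact ⟨fun i => (x i).2, hx.2, rfl⟩

lemma LeftRays_pair {l₁ : ℕ → B} {l₂ : ℕ → C} (h₁ : l₁ ∈ LeftRays Y) (h₂ : l₂ ∈ LeftRays Z) :
    (fun n => (l₁ n, l₂ n)) ∈ LeftRays (prodShift Y Z) := by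
  obtain ⟨x₁, hx₁, rfl⟩ := h₁
  obtain ⟨x₂, hx₂, rfl⟩ := h₂
  exact ⟨fun i => (x₁ i, x₂ i), ⟨hx₁, hx₂⟩, rfl⟩

lemma wordThen_fst (u : List (B × C)) (r : ℕ → B × C) :
    (fun n => (wordThen u r n).1) = wordThen (u.map Prod.fst) (fun n => (r n).1) := by
  funext n
  by_cases h : n < u.length
  · have hL := wordThen_eval_lt (w := u) (r := r) (k := n) h
    have hR := wordThen_eval_lt (w := u.map Prod.fst) (r := fun n => (r n).1) (k := n)
      (by simpa using h)
    show (wordThen u r n).1 = _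
    rw [hL, hR]
    simp [List.getElem_map]
  · have hL := wordThen_eval_ge (w := u) (r := r) (k := n) (by omega)
    have hR := wordThen_eval_ge (w := u.map Prod.fst) (r := fun n => (r n).1) (k := n)
      (by simp; omega)
    show (wordThen u r n).1 = _
    rw [hL, hR]
    simp

lemma wordThen_snd (u : List (B × C)) (r : ℕ → B × C) :
    (fun n => (wordThen u r n).2) = wordThen (u.map Prod.snd) (fun n => (r n).2) := by
  funext n
  by_cases h : n < u.length
  · have hL := wordThen_eval_lt (w := u) (r := r) (k := n) h
    have hR := wordThen_eval_lt (w := u.map Prod.snd) (r := fun n => (r n).2) (k := n)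
      (by simpa using h)
    show (wordThen u r n).2 = _
    rw [hL, hR]
    simp [List.getElem_map]
  · have hL := wordThen_eval_ge (w := u) (r := r) (k := n) (by omega)
    have hR := wordThen_eval_ge (w := u.map Prod.snd) (r := fun n => (r n).2) (k := n)
      (by simp; omega)
    show (wordThen u r n).2 = _
    rw [hL, hR]
    simp

lemma fExt_prod (S : Set (ℕ → B)) (T : Set (ℕ → C)) (u : List (B × C)) :
    fExt (prodRaySet S T) u
      = prodRaySet (fExt S (u.map Prod.fst)) (fExt T (u.map Prod.snd)) := by
  ext r
  show wordThen u r ∈ prodRaySet S T ↔ _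
  constructor
  · rintro ⟨h1, h2⟩
    constructor
    · show wordThen (u.map Prod.fst) (fun n => (r n).1) ∈ S
      rwa [← wordThen_fst]
    · show wordThen (u.map Prod.snd) (fun n => (r n).2) ∈ T
      rwa [← wordThen_snd]
  · rintro ⟨h1, h2⟩
    have h1' : wordThen (u.map Prod.fst) (fun n => (r n).1) ∈ S := h1
    have h2' : wordThen (u.map Prod.snd) (fun n => (r n).2) ∈ T := h2
    rw [← wordThen_fst] at h1'
    rw [← wordThen_snd] at h2'
    exact ⟨h1', h2'⟩

lemma follW_prod (u : List (B × C)) :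
    follW (prodShift Y Z) u
      = prodRaySet (follW Y (u.map Prod.fst)) (follW Z (u.map Prod.snd)) := by
  rw [follW_eq_fExt, RightRays_prod, fExt_prod, ← follW_eq_fExt, ← follW_eq_fExt]

lemma prodRaySet_inj {S S' : Set (ℕ → B)} {T T' : Set (ℕ → C)}
    (hS : S.Nonempty) (hT : T.Nonempty)
    (h : prodRaySet S T = prodRaySet S' T') : S = S' ∧ T = T' := by
  obtain ⟨s, hs⟩ := hS
  obtain ⟨t, ht⟩ := hT
  have key : ∀ (x : ℕ → B) (y : ℕ → C), x ∈ S → y ∈ T → x ∈ S' ∧ y ∈ T' := by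
    intro x y hx hy
    have : (fun n => (x n, y n)) ∈ prodRaySet S' T' := h ▸ ⟨hx, hy⟩
    exact ⟨this.1, this.2⟩
  have hs' : s ∈ S' := (key s t hs ht).1
  have ht' : t ∈ T' := (key s t hs ht).2
  have key' : ∀ (x : ℕ → B) (y : ℕ → C), x ∈ S' → y ∈ T' → x ∈ S ∧ y ∈ T := by
    intro x y hx hy
    have : (fun n => (x n, y n)) ∈ prodRaySet S T := h.symm ▸ ⟨hx, hy⟩
    exact ⟨this.1, this.2⟩
  constructor
  · ext x; exact ⟨fun hx => (key x t hx ht).1, fun hx => (key' x t hx ht').1⟩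
  · ext y; exact ⟨fun hy => (key s y hs hy).2, fun hy => (key' s y hs' hy).2⟩

/-! ### language lemmas -/

lemma cfgWord_length (x : ℤ → A) (i : ℤ) (k : ℕ) : (cfgWord x i k).length = k := by
  simp [cfgWord]

lemma cfgWord_getElem (x : ℤ → A) (i : ℤ) {k t : ℕ} (h : t < k)
    {h' : t < (cfgWord x i k).length} :
    (cfgWord x i k)[t] = x (i + (t : ℤ)) := by
  simp [cfgWord, List.getElem_ofFn]

lemma mem_lang {X : Set (ℤ → A)} {x : ℤ → A} (hx : x ∈ X) (i : ℤ) (k : ℕ) :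
    cfgWord x i k ∈ lang X :=
  ⟨x, hx, i, by rw [cfgWord_length]⟩

lemma cfgWord_append (x : ℤ → A) (i : ℤ) (p q : ℕ) :
    cfgWord x i (p + q) = cfgWord x i p ++ cfgWord x (i + (p : ℤ)) q := by
  refine List.ext_getElem (by simp [cfgWord_length]) ?_
  intro n h1 h2
  rw [cfgWord_getElem x i (by simpa [cfgWord_length] using h1)]
  by_cases hn : n < p
  · rw [List.getElem_append_left (by simpa [cfgWord_length] using hn)]
    rw [cfgWord_getElem x i hn]
  · rw [List.getElem_append_right (by simpa [cfgWord_length] using hn)]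
    rw [cfgWord_getElem x (i + (p:ℤ)) (by simp [cfgWord_length] at h1 ⊢; omega)]
    rw [cfgWord_length]
    congr 1
    omega

lemma lang_ext {X : Set (ℤ → A)} {u : List A} (hu : u ∈ lang X) (p q : ℕ) :
    ∃ χ ξ : List A, χ.length = p ∧ ξ.length = q ∧ χ ++ u ++ ξ ∈ lang X := by
  obtain ⟨x, hx, i, hcfg⟩ := hu
  refine ⟨cfgWord x (i - (p:ℤ)) p, cfgWord x (i + (u.length : ℤ)) q,
    cfgWord_length _ _ _, cfgWord_length _ _ _, ?_⟩
  have e1 : cfgWord x (i - (p:ℤ)) (p + u.length + q)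
      = cfgWord x (i - (p:ℤ)) (p + u.length) ++ cfgWord x (i + (u.length:ℤ)) q := by
    rw [cfgWord_append]
    congr 2
    push_cast; ring
  have e2 : cfgWord x (i - (p:ℤ)) (p + u.length)
      = cfgWord x (i - (p:ℤ)) p ++ u := by
    rw [cfgWord_append]
    congr 1
    have hip : i - (p:ℤ) + (p:ℤ) = i := by ring
    rw [hip, hcfg]
  have : cfgWord x (i - (p:ℤ)) p ++ u ++ cfgWord x (i + (u.length:ℤ)) q
      = cfgWord x (i - (p:ℤ)) (p + u.length + q) := by
    rw [e1, e2]
  rw [this]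
  exact mem_lang hx _ _

lemma map_cfgWord_fst (x : ℤ → B × C) (i : ℤ) (k : ℕ) :
    (cfgWord x i k).map Prod.fst = cfgWord (fun i => (x i).1) i k := by
  simp [cfgWord, List.map_ofFn]; rfl

lemma map_cfgWord_snd (x : ℤ → B × C) (i : ℤ) (k : ℕ) :
    (cfgWord x i k).map Prod.snd = cfgWord (fun i => (x i).2) i k := by
  simp [cfgWord, List.map_ofFn]; rfl

lemma lang_proj_fst {u : List (B × C)} (h : u ∈ lang (prodShift Y Z)) :
    u.map Prod.fst ∈ lang Y := by
  obtain ⟨x, hx, i, hcfg⟩ := h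
  exact ⟨fun i => (x i).1, hx.1, i, by
    rw [List.length_map, ← map_cfgWord_fst, hcfg]⟩

lemma lang_proj_snd {u : List (B × C)} (h : u ∈ lang (prodShift Y Z)) :
    u.map Prod.snd ∈ lang Z := by
  obtain ⟨x, hx, i, hcfg⟩ := h
  exact ⟨fun i => (x i).2, hx.2, i, by
    rw [List.length_map, ← map_cfgWord_snd, hcfg]⟩

lemma follW_nonempty {X : Set (ℤ → A)} (hX : IsSubshift X) {u : List A} (hu : u ∈ lang X) :
    (follW X u).Nonempty := by
  obtain ⟨x, hx, i, hcfg⟩ := hu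
  refine ⟨fun n => x (i + (u.length : ℤ) + (n : ℤ)), ?_⟩
  show wordThen u _ ∈ RightRays X
  refine ⟨fun m => x (m + i), shift_mem hX hx i, ?_⟩
  funext k
  show x ((k : ℤ) + i) = _
  by_cases hk : k < u.length
  · rw [wordThen_eval_lt hk]
    have hk' : k < (cfgWord x i u.length).length := by rwa [cfgWord_length]
    have e := List.getElem_of_eq hcfg hk'
    rw [← e, cfgWord_getElem x i (by rwa [cfgWord_length] at hk')]
    ring_nf
  · rw [wordThen_eval_ge (by omega)]
    congr 1
    push_cast [Nat.cast_sub (by omega : u.length ≤ k)]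
    ring

lemma lang_zip (hY : IsSubshift Y) (hZ : IsSubshift Z) {u₁ : List B} {u₂ : List C}
    (h1 : u₁ ∈ lang Y) (h2 : u₂ ∈ lang Z) (hlen : u₁.length = u₂.length) :
    u₁.zip u₂ ∈ lang (prodShift Y Z) := by
  obtain ⟨x₁, hx₁, i₁, hc1⟩ := h1
  obtain ⟨x₂, hx₂, i₂, hc2⟩ := h2
  have hy : (fun n => x₂ (n + (i₂ - i₁))) ∈ Z := shift_mem hZ hx₂ _
  refine ⟨fun i => (x₁ i, x₂ (i + (i₂ - i₁))), ⟨hx₁, hy⟩, i₁, ?_⟩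
  refine List.ext_getElem (cfgWord_length _ _ _) ?_
  intro n hn1 hn2
  have hnu : n < u₁.length := by
    simp only [List.length_zip] at hn2; omega
  rw [cfgWord_getElem _ i₁ (by simpa [cfgWord_length] using hn1), List.getElem_zip]
  have hn1' : n < (cfgWord x₁ i₁ u₁.length).length := by rw [cfgWord_length]; omega
  have hn2' : n < (cfgWord x₂ i₂ u₂.length).length := by rw [cfgWord_length]; omega
  have e1 : u₁[n] = x₁ (i₁ + (n:ℤ)) := by
    rw [← List.getElem_of_eq hc1 hn1', cfgWord_getElem x₁ i₁ (by omega)]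
  have e2 : u₂[n] = x₂ (i₂ + (n:ℤ)) := by
    rw [← List.getElem_of_eq hc2 hn2', cfgWord_getElem x₂ i₂ (by omega)]
  rw [e1, e2]
  show (x₁ (i₁ + n), x₂ (i₁ + n + (i₂ - i₁))) = _
  congr 2
  ring

/-! ### tails and the reset lemma -/

def tailW (l : ℕ → A) (n : ℕ) : List A := List.ofFn fun k : Fin n => l (n - 1 - (k : ℕ))

lemma tailW_length (l : ℕ → A) (n : ℕ) : (tailW l n).length = n := by simp [tailW]

lemma tailW_getElem (l : ℕ → A) {n k : ℕ} (h : k < n) {h' : k < (tailW l n).length} :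
    (tailW l n)[k] = l (n - 1 - k) := by
  simp [tailW, List.getElem_ofFn]

lemma reset {X : Set (ℤ → A)} (hX : IsSubshift X) {μ : ℕ → A} {p : List A}
    (hsfx : raySuffix μ p) (hfoll : foll X μ = follW X p) {n : ℕ} (hn : p.length ≤ n) :
    follW X (tailW μ n) = follW X p := by
  ext r
  constructor
  · rintro ⟨x, hx, hxr⟩
    refine ⟨fun i => x (i + ((n - p.length : ℕ) : ℤ)), shift_mem hX hx _, ?_⟩
    funext k
    have hx' : ∀ m : ℕ, x (m : ℤ) = wordThen (tailW μ n) r m := fun m => congrFun hxr m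
    show x ((k:ℤ) + ((n - p.length : ℕ):ℤ)) = wordThen p r k
    have ecast : ((k:ℤ) + ((n - p.length : ℕ):ℤ)) = ((k + (n - p.length) : ℕ) : ℤ) := by
      push_cast; ring
    rw [ecast, hx' (k + (n - p.length))]
    by_cases hk : k < p.length
    · rw [wordThen_eval_lt (by rw [tailW_length]; omega), wordThen_eval_lt hk]
      rw [tailW_getElem μ (by omega)]
      have := hsfx ⟨k, hk⟩
      simp only [List.get_eq_getElem] at this
      rw [← this]
      congr 1
      omega
    · rw [wordThen_eval_ge (by rw [tailW_length]; omega), wordThen_eval_ge (by omega)]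
      rw [tailW_length]
      congr 1
      omega
  · intro hr
    rw [← hfoll] at hr
    have hmem : (fun i => glue μ r (i + (-(n:ℤ)))) ∈ X := shift_mem hX hr _
    refine ⟨fun i => glue μ r (i + (-(n:ℤ))), hmem, ?_⟩
    funext k
    show glue μ r ((k:ℤ) + (-(n:ℤ))) = wordThen (tailW μ n) r k
    by_cases hk : k < n
    · rw [wordThen_eval_lt (by rw [tailW_length]; omega)]
      rw [tailW_getElem μ (by omega)]
      simp only [glue]
      rw [if_neg (by omega)]
      congr 1
      omega
    · rw [wordThen_eval_ge (by rw [tailW_length]; omega)]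
      simp only [glue]
      rw [if_pos (by omega)]
      rw [tailW_length]
      congr 1
      omega

lemma occ_tail {l : ℕ → A} {Q : List A} {j : ℕ}
    (hocc : ∀ k : Fin Q.length, l (j + (Q.length - 1 - (k : ℕ))) = Q.get k) :
    tailW l (j + Q.length) = Q ++ tailW l j := by
  refine List.ext_getElem (by simp [tailW_length]; omega) ?_
  intro k h1 h2
  rw [tailW_getElem l (by rwa [tailW_length] at h1)]
  by_cases hk : k < Q.length
  · rw [List.getElem_append_left hk]
    have := hocc ⟨k, hk⟩
    simp only [List.get_eq_getElem] at this
    rw [← this]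
    congr 1
    omega
  · rw [List.getElem_append_right (by omega)]
    rw [tailW_getElem l (by simp [tailW_length] at h1 ⊢; omega)]
    congr 1
    simp only [tailW_length] at h1
    omega

lemma cycle_of_occ {X : Set (ℤ → A)} (hX : IsSubshift X) {μ : ℕ → A} {p : List A}
    (hsfx : raySuffix μ p) (hfoll : foll X μ = follW X p) {j : ℕ}
    (hocc : ∀ k : Fin p.length, μ (j + (p.length - 1 - (k : ℕ))) = p.get k) :
    fExt (follW X p) (tailW μ j) = follW X p := by
  have h1 : tailW μ (j + p.length) = p ++ tailW μ j := occ_tail hocc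
  have h2 : follW X (tailW μ (j + p.length)) = follW X p :=
    reset hX hsfx hfoll (by omega)
  rw [h1, follW_append] at h2
  exact h2


/-! ### occurrence projection for zipped words -/

lemma occ_zip_fst {l : ℕ → B × C} {χ₁ u₁ ξ₁ : List B} {χ₂ u₂ ξ₂ : List C} {j : ℕ}
    (hlen : (χ₁ ++ u₁ ++ ξ₁).length = (χ₂ ++ u₂ ++ ξ₂).length)
    (hj : ∀ k : Fin ((χ₁ ++ u₁ ++ ξ₁).zip (χ₂ ++ u₂ ++ ξ₂)).length,
      l (j + (((χ₁ ++ u₁ ++ ξ₁).zip (χ₂ ++ u₂ ++ ξ₂)).length - 1 - (k : ℕ)))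
        = ((χ₁ ++ u₁ ++ ξ₁).zip (χ₂ ++ u₂ ++ ξ₂)).get k) :
    ∀ k : Fin u₁.length,
      (fun n => (l n).1) ((j + ξ₁.length) + (u₁.length - 1 - (k : ℕ))) = u₁.get k := by
  intro ⟨k, hk⟩
  have hzl : ((χ₁ ++ u₁ ++ ξ₁).zip (χ₂ ++ u₂ ++ ξ₂)).length
      = χ₁.length + u₁.length + ξ₁.length := by
    rw [List.length_zip, ← hlen]
    simp [List.length_append]
    omega
  have hK : χ₁.length + k < ((χ₁ ++ u₁ ++ ξ₁).zip (χ₂ ++ u₂ ++ ξ₂)).length := by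
    rw [hzl]; omega
  have h := hj ⟨χ₁.length + k, hK⟩
  simp only [List.get_eq_getElem, List.getElem_zip] at h
  have hfst := congrArg Prod.fst h
  simp only at hfst
  have eget : (χ₁ ++ u₁ ++ ξ₁)[χ₁.length + k]'(by simp [List.length_append]; omega) = u₁[k] := by
    rw [List.getElem_append_left (by simp [List.length_append]; omega :
      χ₁.length + k < (χ₁ ++ u₁).length)]
    rw [List.getElem_append_right (by omega : χ₁.length ≤ χ₁.length + k)]
    congr 1
    omega
  rw [eget] at hfst
  simp only [List.get_eq_getElem]
  rw [← hfst]
  show (l _).1 = (l _).1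
  congr 2
  rw [hzl]
  omega

lemma occ_zip_snd {l : ℕ → B × C} {χ₁ u₁ ξ₁ : List B} {χ₂ u₂ ξ₂ : List C} {j : ℕ}
    (hlen : (χ₁ ++ u₁ ++ ξ₁).length = (χ₂ ++ u₂ ++ ξ₂).length)
    (hj : ∀ k : Fin ((χ₁ ++ u₁ ++ ξ₁).zip (χ₂ ++ u₂ ++ ξ₂)).length,
      l (j + (((χ₁ ++ u₁ ++ ξ₁).zip (χ₂ ++ u₂ ++ ξ₂)).length - 1 - (k : ℕ)))
        = ((χ₁ ++ u₁ ++ ξ₁).zip (χ₂ ++ u₂ ++ ξ₂)).get k) :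
    ∀ k : Fin u₂.length,
      (fun n => (l n).2) ((j + ξ₂.length) + (u₂.length - 1 - (k : ℕ))) = u₂.get k := by
  intro ⟨k, hk⟩
  have hzl : ((χ₁ ++ u₁ ++ ξ₁).zip (χ₂ ++ u₂ ++ ξ₂)).length
      = χ₂.length + u₂.length + ξ₂.length := by
    rw [List.length_zip, hlen]
    simp [List.length_append]
    omega
  have hK : χ₂.length + k < ((χ₁ ++ u₁ ++ ξ₁).zip (χ₂ ++ u₂ ++ ξ₂)).length := by
    rw [hzl]; omega
  have h := hj ⟨χ₂.length + k, hK⟩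
  simp only [List.get_eq_getElem, List.getElem_zip] at h
  have hsnd := congrArg Prod.snd h
  simp only at hsnd
  have eget : (χ₂ ++ u₂ ++ ξ₂)[χ₂.length + k]'(by simp [List.length_append]; omega) = u₂[k] := by
    rw [List.getElem_append_left (by simp [List.length_append]; omega :
      χ₂.length + k < (χ₂ ++ u₂).length)]
    rw [List.getElem_append_right (by omega : χ₂.length ≤ χ₂.length + k)]
    congr 1
    omega
  rw [eget] at hsnd
  simp only [List.get_eq_getElem]
  rw [← hsnd]
  show (l _).2 = (l _).2
  congr 2
  rw [hzl]
  omega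

/-! ### the magic ray package -/

lemma raySuffix_comp_fst {l : ℕ → B × C} {w : List (B × C)} (h : raySuffix l w) :
    raySuffix (fun n => (l n).1) (w.map Prod.fst) := by
  intro k
  have hk : (k : ℕ) < w.length := by simpa using k.2
  have := congrArg Prod.fst (h ⟨k, hk⟩)
  simp only [List.get_eq_getElem, List.getElem_map, List.length_map]
  simp only [List.get_eq_getElem] at this
  rw [← this]

lemma raySuffix_comp_snd {l : ℕ → B × C} {w : List (B × C)} (h : raySuffix l w) :
    raySuffix (fun n => (l n).2) (w.map Prod.snd) := by
  intro k
  have hk : (k : ℕ) < w.length := by simpa using k.2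
  have := congrArg Prod.snd (h ⟨k, hk⟩)
  simp only [List.get_eq_getElem, List.getElem_map, List.length_map]
  simp only [List.get_eq_getElem] at this
  rw [← this]

lemma magic_package (hw : HalfSyncWord (prodShift Y Z) w) :
    ∃ l : ℕ → B × C,
      l ∈ LeftRays (prodShift Y Z) ∧ langL l = lang (prodShift Y Z) ∧
      foll (prodShift Y Z) l = follW (prodShift Y Z) w ∧
      raySuffix (fun n => (l n).1) (w.map Prod.fst) ∧
      raySuffix (fun n => (l n).2) (w.map Prod.snd) ∧
      foll Y (fun n => (l n).1) = follW Y (w.map Prod.fst) ∧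
      foll Z (fun n => (l n).2) = follW Z (w.map Prod.snd) := by
  obtain ⟨hwlang, l, hl, hsfx, hlangL, hfoll⟩ := hw
  have hne1 : (foll Y (fun n => (l n).1)).Nonempty :=
    mem_LeftRays_iff.mp (LeftRays_comp_fst hl)
  have hne2 : (foll Z (fun n => (l n).2)).Nonempty :=
    mem_LeftRays_iff.mp (LeftRays_comp_snd hl)
  have hprod : prodRaySet (foll Y (fun n => (l n).1)) (foll Z (fun n => (l n).2))
      = prodRaySet (follW Y (w.map Prod.fst)) (follW Z (w.map Prod.snd)) := by
    rw [← foll_prod, ← follW_prod, hfoll]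
  obtain ⟨e1, e2⟩ := prodRaySet_inj hne1 hne2 hprod
  exact ⟨l, hl, hlangL, hfoll, raySuffix_comp_fst hsfx, raySuffix_comp_snd hsfx, e1, e2⟩

/-! ### offset cycles -/

lemma offset_cycles (hY : IsSubshift Y) (hZ : IsSubshift Z)
    {w : List (B × C)} (hw : HalfSyncWord (prodShift Y Z) w) (α β : ℕ) :
    ∃ (η₁ : List B) (η₂ : List C) (j : ℕ),
      η₁.length = j + α ∧ η₂.length = j + β ∧
      fExt (follW Y (w.map Prod.fst)) η₁ = follW Y (w.map Prod.fst) ∧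
      fExt (follW Z (w.map Prod.snd)) η₂ = follW Z (w.map Prod.snd) := by
  obtain ⟨l, hl, hlangL, hfoll, hsfx1, hsfx2, hfoll1, hfoll2⟩ := magic_package hw
  have hwlang := hw.1
  have hw1 : w.map Prod.fst ∈ lang Y := lang_proj_fst hwlang
  have hw2 : w.map Prod.snd ∈ lang Z := lang_proj_snd hwlang
  obtain ⟨χ₁, ξ₁, hχ₁, hξ₁, hWord1⟩ := lang_ext hw1 β α
  obtain ⟨χ₂, ξ₂, hχ₂, hξ₂, hWord2⟩ := lang_ext hw2 α β
  have hlen : (χ₁ ++ w.map Prod.fst ++ ξ₁).length = (χ₂ ++ w.map Prod.snd ++ ξ₂).length := by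
    simp [List.length_append, hχ₁, hξ₁, hχ₂, hξ₂]
    omega
  have hΦ : (χ₁ ++ w.map Prod.fst ++ ξ₁).zip (χ₂ ++ w.map Prod.snd ++ ξ₂)
      ∈ lang (prodShift Y Z) := lang_zip hY hZ hWord1 hWord2 hlen
  have hocc : occursInLeft l ((χ₁ ++ w.map Prod.fst ++ ξ₁).zip (χ₂ ++ w.map Prod.snd ++ ξ₂)) := by
    rw [← hlangL] at hΦ
    exact hΦ
  obtain ⟨j, hj⟩ := hocc
  have occ1 := occ_zip_fst hlen hj
  have occ2 := occ_zip_snd hlen hj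
  rw [hξ₁] at occ1
  rw [hξ₂] at occ2
  refine ⟨tailW (fun n => (l n).1) (j + α), tailW (fun n => (l n).2) (j + β), j,
    tailW_length _ _, tailW_length _ _, ?_, ?_⟩
  · exact cycle_of_occ hY hsfx1 hfoll1 occ1
  · exact cycle_of_occ hZ hsfx2 hfoll2 occ2


lemma foll_pair (l₁ : ℕ → B) (l₂ : ℕ → C) :
    foll (prodShift Y Z) (fun n => (l₁ n, l₂ n)) = prodRaySet (foll Y l₁) (foll Z l₂) :=
  foll_prod _

lemma extendRay_comp_fst (l : ℕ → B × C) (a : B × C) :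
    (fun n => (extendRay l a n).1) = extendRay (fun n => (l n).1) a.1 := by
  funext n; simp only [extendRay, apply_ite Prod.fst]

lemma extendRay_comp_snd (l : ℕ → B × C) (a : B × C) :
    (fun n => (extendRay l a n).2) = extendRay (fun n => (l n).2) a.2 := by
  funext n; simp only [extendRay, apply_ite Prod.snd]

lemma extendRay_pair (l₁ : ℕ → B) (l₂ : ℕ → C) (a : B × C) :
    (fun n => (extendRay l₁ a.1 n, extendRay l₂ a.2 n)) = extendRay (fun n => (l₁ n, l₂ n)) a := by
  funext n
  by_cases h : n = 0
  · simp [extendRay, h]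
  · simp [extendRay, h]

/-! ### main lemmas -/

lemma fvertex_prod_of_comps (hY : IsSubshift Y) (hZ : IsSubshift Z)
    {w : List (B × C)} (hw : HalfSyncWord (prodShift Y Z) w)
    {v₁ : Set (ℕ → B)} {v₂ : Set (ℕ → C)}
    (h₁ : FVertex Y (w.map Prod.fst) v₁) (h₂ : FVertex Z (w.map Prod.snd) v₂) :
    FVertex (prodShift Y Z) w (prodRaySet v₁ v₂) := by
  have hX := prod_isSubshift hY hZ
  obtain ⟨⟨lam₁, hlam₁, hv₁⟩, hr₁, hb₁⟩ := h₁
  obtain ⟨⟨lam₂, hlam₂, hv₂⟩, hr₂, hb₂⟩ := h₂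
  obtain ⟨l, hl, hlangL, hfoll, hsfx1, hsfx2, hfoll1, hfoll2⟩ := magic_package hw
  obtain ⟨s₁, hs₁⟩ := word_of_kreach hY hr₁
  obtain ⟨t₁, ht₁⟩ := word_of_kreach hY hb₁
  obtain ⟨s₂, hs₂⟩ := word_of_kreach hZ hr₂
  obtain ⟨t₂, ht₂⟩ := word_of_kreach hZ hb₂
  have hv₁ne : v₁.Nonempty := by rw [hv₁]; exact mem_LeftRays_iff.mp hlam₁
  have hv₂ne : v₂.Nonempty := by rw [hv₂]; exact mem_LeftRays_iff.mp hlam₂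
  obtain ⟨r₁0, hr₁0⟩ := hv₁ne
  obtain ⟨r₂0, hr₂0⟩ := hv₂ne
  have hvne : (prodRaySet v₁ v₂).Nonempty := ⟨fun n => (r₁0 n, r₂0 n), hr₁0, hr₂0⟩
  have hUXne : (follW (prodShift Y Z) w).Nonempty := follW_nonempty hX hw.1
  -- forward reach
  obtain ⟨η₁, η₂, j, hη₁l, hη₂l, hc1, hc2⟩ := offset_cycles hY hZ hw s₂.length s₁.length
  have hE₁ : fExt (follW Y (w.map Prod.fst)) (η₁ ++ s₁) = v₁ := by
    rw [fExt_append, hc1, ← hs₁]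
  have hE₂ : fExt (follW Z (w.map Prod.snd)) (η₂ ++ s₂) = v₂ := by
    rw [fExt_append, hc2, ← hs₂]
  have hlenE : (η₁ ++ s₁).length = (η₂ ++ s₂).length := by
    simp only [List.length_append, hη₁l, hη₂l]; omega
  have hmapf : ((η₁ ++ s₁).zip (η₂ ++ s₂)).map Prod.fst = η₁ ++ s₁ :=
    List.map_fst_zip (le_of_eq hlenE)
  have hmaps : ((η₁ ++ s₁).zip (η₂ ++ s₂)).map Prod.snd = η₂ ++ s₂ :=
    List.map_snd_zip (le_of_eq hlenE.symm)
  have hkey : fExt (follW (prodShift Y Z) w) ((η₁ ++ s₁).zip (η₂ ++ s₂))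
      = prodRaySet v₁ v₂ := by
    rw [follW_prod, fExt_prod, hmapf, hmaps, hE₁, hE₂]
  have hreach1 : KReach (prodShift Y Z) (follW (prodShift Y Z) w) (prodRaySet v₁ v₂) := by
    have hne : (fExt (foll (prodShift Y Z) l) ((η₁ ++ s₁).zip (η₂ ++ s₂))).Nonempty := by
      rw [hfoll, hkey]; exact hvne
    have h := kreach_word hX hl _ hne
    rw [hfoll] at h
    rw [hkey] at h
    exact h
  -- backward reach
  obtain ⟨θ₁, θ₂, j', hθ₁l, hθ₂l, hd1, hd2⟩ := offset_cycles hY hZ hw t₂.length t₁.length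
  have hF₁ : fExt v₁ (t₁ ++ θ₁) = follW Y (w.map Prod.fst) := by
    rw [fExt_append, ← ht₁, hd1]
  have hF₂ : fExt v₂ (t₂ ++ θ₂) = follW Z (w.map Prod.snd) := by
    rw [fExt_append, ← ht₂, hd2]
  have hlenF : (t₁ ++ θ₁).length = (t₂ ++ θ₂).length := by
    simp only [List.length_append, hθ₁l, hθ₂l]; omega
  have hFmapf : ((t₁ ++ θ₁).zip (t₂ ++ θ₂)).map Prod.fst = t₁ ++ θ₁ :=
    List.map_fst_zip (le_of_eq hlenF)
  have hFmaps : ((t₁ ++ θ₁).zip (t₂ ++ θ₂)).map Prod.snd = t₂ ++ θ₂ :=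
    List.map_snd_zip (le_of_eq hlenF.symm)
  have hkey2 : fExt (prodRaySet v₁ v₂) ((t₁ ++ θ₁).zip (t₂ ++ θ₂))
      = follW (prodShift Y Z) w := by
    rw [fExt_prod, hFmapf, hFmaps, hF₁, hF₂, ← follW_prod]
  have hpairmem : (fun n => (lam₁ n, lam₂ n)) ∈ LeftRays (prodShift Y Z) :=
    LeftRays_pair hlam₁ hlam₂
  have hfollpair : foll (prodShift Y Z) (fun n => (lam₁ n, lam₂ n)) = prodRaySet v₁ v₂ := by
    rw [foll_pair, ← hv₁, ← hv₂]
  have hreach2 : KReach (prodShift Y Z) (prodRaySet v₁ v₂) (follW (prodShift Y Z) w) := by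
    have hne : (fExt (foll (prodShift Y Z) (fun n => (lam₁ n, lam₂ n)))
        ((t₁ ++ θ₁).zip (t₂ ++ θ₂))).Nonempty := by
      rw [hfollpair, hkey2]; exact hUXne
    have h := kreach_word hX hpairmem _ hne
    rw [hfollpair] at h
    rw [hkey2] at h
    exact h
  exact ⟨⟨fun n => (lam₁ n, lam₂ n), hpairmem, hfollpair.symm⟩, hreach1, hreach2⟩

lemma comps_of_fvertex_prod (hY : IsSubshift Y) (hZ : IsSubshift Z)
    {w : List (B × C)} (hw : HalfSyncWord (prodShift Y Z) w)
    {v : Set (ℕ → B × C)} (h : FVertex (prodShift Y Z) w v) :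
    ∃ v₁ v₂, FVertex Y (w.map Prod.fst) v₁ ∧ FVertex Z (w.map Prod.snd) v₂ ∧
      v = prodRaySet v₁ v₂ := by
  have hX := prod_isSubshift hY hZ
  obtain ⟨⟨lam, hlam, hvfoll⟩, hUv, hvU⟩ := h
  obtain ⟨l, hl, hlangL, hfoll, hsfx1, hsfx2, hfoll1, hfoll2⟩ := magic_package hw
  have hv : v = prodRaySet (foll Y (fun n => (lam n).1)) (foll Z (fun n => (lam n).2)) := by
    rw [hvfoll, foll_prod]
  have hv₁ne : (foll Y (fun n => (lam n).1)).Nonempty :=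
    mem_LeftRays_iff.mp (LeftRays_comp_fst hlam)
  have hv₂ne : (foll Z (fun n => (lam n).2)).Nonempty :=
    mem_LeftRays_iff.mp (LeftRays_comp_snd hlam)
  have hU1ne : (follW Y (w.map Prod.fst)).Nonempty := follW_nonempty hY (lang_proj_fst hw.1)
  have hU2ne : (follW Z (w.map Prod.snd)).Nonempty := follW_nonempty hZ (lang_proj_snd hw.1)
  obtain ⟨E, hE⟩ := word_of_kreach hX hUv
  have hdec : prodRaySet (foll Y (fun n => (lam n).1)) (foll Z (fun n => (lam n).2))
      = prodRaySet (fExt (follW Y (w.map Prod.fst)) (E.map Prod.fst))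
        (fExt (follW Z (w.map Prod.snd)) (E.map Prod.snd)) := by
    rw [← hv, hE, follW_prod, fExt_prod]
  obtain ⟨he1, he2⟩ := prodRaySet_inj hv₁ne hv₂ne hdec
  obtain ⟨F, hF⟩ := word_of_kreach hX hvU
  have hdec2 : prodRaySet (follW Y (w.map Prod.fst)) (follW Z (w.map Prod.snd))
      = prodRaySet (fExt (foll Y (fun n => (lam n).1)) (F.map Prod.fst))
        (fExt (foll Z (fun n => (lam n).2)) (F.map Prod.snd)) := by
    rw [← follW_prod, hF, hv, fExt_prod]
  obtain ⟨hf1, hf2⟩ := prodRaySet_inj hU1ne hU2ne hdec2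
  refine ⟨foll Y (fun n => (lam n).1), foll Z (fun n => (lam n).2), ?_, ?_, hv⟩
  · refine ⟨⟨fun n => (lam n).1, LeftRays_comp_fst hlam, rfl⟩, ?_, ?_⟩
    · have hne : (fExt (foll Y (fun n => (l n).1)) (E.map Prod.fst)).Nonempty := by
        rw [hfoll1, ← he1]; exact hv₁ne
      have h := kreach_word hY (LeftRays_comp_fst hl) (E.map Prod.fst) hne
      rw [hfoll1] at h
      rw [← he1] at h
      exact h
    · have hne : (fExt (foll Y (fun n => (lam n).1)) (F.map Prod.fst)).Nonempty := by
        rw [← hf1]; exact hU1ne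
      have h := kreach_word hY (LeftRays_comp_fst hlam) (F.map Prod.fst) hne
      rw [← hf1] at h
      exact h
  · refine ⟨⟨fun n => (lam n).2, LeftRays_comp_snd hlam, rfl⟩, ?_, ?_⟩
    · have hne : (fExt (foll Z (fun n => (l n).2)) (E.map Prod.snd)).Nonempty := by
        rw [hfoll2, ← he2]; exact hv₂ne
      have h := kreach_word hZ (LeftRays_comp_snd hl) (E.map Prod.snd) hne
      rw [hfoll2] at h
      rw [← he2] at h
      exact h
    · have hne : (fExt (foll Z (fun n => (lam n).2)) (F.map Prod.snd)).Nonempty := by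
        rw [← hf2]; exact hU2ne
      have h := kreach_word hZ (LeftRays_comp_snd hlam) (F.map Prod.snd) hne
      rw [← hf2] at h
      exact h



theorem stmt4 [Finite B] [Finite C]
    (Y : Set (ℤ → B)) (Z : Set (ℤ → C)) (hY : IsSubshift Y) (hZ : IsSubshift Z)
    (hYh : HalfSynchronized Y) (hZh : HalfSynchronized Z)
    (hXh : HalfSynchronized (prodShift Y Z))
    (w : List (B × C)) (hw : HalfSyncWord (prodShift Y Z) w) :
    (∀ v : Set (ℕ → B × C), FVertex (prodShift Y Z) w v ↔
        ∃ v₁ v₂, FVertex Y (w.map Prod.fst) v₁ ∧ FVertex Z (w.map Prod.snd) v₂ ∧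
          v = prodRaySet v₁ v₂) ∧
    (∀ (u v : Set (ℕ → B × C)) (a : B × C),
        (FVertex (prodShift Y Z) w u ∧ FVertex (prodShift Y Z) w v ∧
          KEdge (prodShift Y Z) u a v) ↔
        ∃ u₁ v₁ u₂ v₂,
          (FVertex Y (w.map Prod.fst) u₁ ∧ FVertex Y (w.map Prod.fst) v₁ ∧
            KEdge Y u₁ a.1 v₁) ∧
          (FVertex Z (w.map Prod.snd) u₂ ∧ FVertex Z (w.map Prod.snd) v₂ ∧
            KEdge Z u₂ a.2 v₂) ∧
          u = prodRaySet u₁ u₂ ∧ v = prodRaySet v₁ v₂) := by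
  constructor
  · intro v
    constructor
    · intro h
      exact comps_of_fvertex_prod hY hZ hw h
    · rintro ⟨v₁, v₂, h₁, h₂, rfl⟩
      exact fvertex_prod_of_comps hY hZ hw h₁ h₂
  · intro u v a
    constructor
    · rintro ⟨hu, hv, l, hl, hla, hul, hvl⟩
      -- component decompositions of u and v coming from the edge's own ray
      have hu' : u = prodRaySet (foll Y (fun n => (l n).1)) (foll Z (fun n => (l n).2)) := by
        rw [hul, foll_prod]
      have hv' : v = prodRaySet (foll Y (extendRay (fun n => (l n).1) a.1))
          (foll Z (extendRay (fun n => (l n).2) a.2)) := by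
        rw [hvl, foll_prod, extendRay_comp_fst, extendRay_comp_snd]
      have hla1 : extendRay (fun n => (l n).1) a.1 ∈ LeftRays Y := by
        rw [← extendRay_comp_fst]; exact LeftRays_comp_fst hla
      have hla2 : extendRay (fun n => (l n).2) a.2 ∈ LeftRays Z := by
        rw [← extendRay_comp_snd]; exact LeftRays_comp_snd hla
      -- Fischer-vertex components via part (1) and uniqueness
      have hu₁ne : (foll Y (fun n => (l n).1)).Nonempty :=
        mem_LeftRays_iff.mp (LeftRays_comp_fst hl)
      have hu₂ne : (foll Z (fun n => (l n).2)).Nonempty :=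
        mem_LeftRays_iff.mp (LeftRays_comp_snd hl)
      have hv₁ne : (foll Y (extendRay (fun n => (l n).1) a.1)).Nonempty :=
        mem_LeftRays_iff.mp hla1
      have hv₂ne : (foll Z (extendRay (fun n => (l n).2) a.2)).Nonempty :=
        mem_LeftRays_iff.mp hla2
      obtain ⟨u₁', u₂', hu₁'F, hu₂'F, huP⟩ := comps_of_fvertex_prod hY hZ hw hu
      obtain ⟨v₁', v₂', hv₁'F, hv₂'F, hvP⟩ := comps_of_fvertex_prod hY hZ hw hv
      obtain ⟨hequ1, hequ2⟩ := prodRaySet_inj hu₁ne hu₂ne (hu'.symm.trans huP)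
      obtain ⟨heqv1, heqv2⟩ := prodRaySet_inj hv₁ne hv₂ne (hv'.symm.trans hvP)
      refine ⟨foll Y (fun n => (l n).1), foll Y (extendRay (fun n => (l n).1) a.1),
        foll Z (fun n => (l n).2), foll Z (extendRay (fun n => (l n).2) a.2),
        ⟨hequ1 ▸ hu₁'F, heqv1 ▸ hv₁'F, ?_⟩, ⟨hequ2 ▸ hu₂'F, heqv2 ▸ hv₂'F, ?_⟩, hu', hv'⟩
      · exact ⟨fun n => (l n).1, LeftRays_comp_fst hl, hla1, rfl, rfl⟩
      · exact ⟨fun n => (l n).2, LeftRays_comp_snd hl, hla2, rfl, rfl⟩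
    · rintro ⟨u₁, v₁, u₂, v₂, ⟨hu₁F, hv₁F, l₁, hl₁, hl₁a, he₁u, he₁v⟩,
        ⟨hu₂F, hv₂F, l₂, hl₂, hl₂a, he₂u, he₂v⟩, rfl, rfl⟩
      refine ⟨fvertex_prod_of_comps hY hZ hw hu₁F hu₂F,
        fvertex_prod_of_comps hY hZ hw hv₁F hv₂F, ?_⟩
      refine ⟨fun n => (l₁ n, l₂ n), LeftRays_pair hl₁ hl₂, ?_, ?_, ?_⟩
      · rw [← extendRay_pair]; exact LeftRays_pair hl₁a hl₂a
      · rw [foll_pair, ← he₁u, ← he₂u]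
      · rw [← extendRay_pair, foll_pair, ← he₁v, ← he₂v]

end Paper
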